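/- Let w be a C² solution on (0,∞) of μβ(x)w'(x) + (σ²β(x)²/2)w''(x) - r w(x) = 0 on (a,∞) with w equal to A x^δ on (0,a] (δ = 2rσ²/(μ²+2rσ²), A > 0), where β is increasing, concave, positive on (0,∞) with finite limit β̄ and σ²(1-δ)β(a) = μa. If w is increasing on [a,∞), then there exists b > a such that w''(b) = 0; moreover w''(a) = -2rAa^δ/(σ²β(a)²) < 0 and w is concave on (a, b) where b = inf{x ≥ a : w''(x) = 0}. -/

import Mathlib

open Set Filter Topology

set_option maxHeartbeats 2000000 in
theorem stmt_18 (μ σ r A a βbar : ℝ) (hσ : 0 < σ) (hr : 0 < r) (hμr : r < μ)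
    (hA : 0 < A) (ha : 0 < a)
    (δ : ℝ) (hδ : δ = 2 * r * σ ^ 2 / (μ ^ 2 + 2 * r * σ ^ 2))
    (β : ℝ → ℝ) (hβmono : MonotoneOn β (Ici 0)) (hβconc : ConcaveOn ℝ (Ici 0) β)
    (hβpos : ∀ x > (0:ℝ), 0 < β x) (hβlim : Tendsto β atTop (nhds βbar))
    (hrel : σ ^ 2 * (1 - δ) * β a = μ * a)
    (w : ℝ → ℝ) (hw : ContDiffOn ℝ 2 w (Ioi 0))
    (hode : ∀ x > a,
      μ * β x * deriv w x + σ ^ 2 * β x ^ 2 / 2 * deriv (deriv w) x - r * w x = 0)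
    (hwpow : ∀ x ∈ Ioc (0:ℝ) a, w x = A * x ^ δ)
    (hmono : MonotoneOn w (Ici a)) :
    deriv (deriv w) a = -(2 * r * A * a ^ δ) / (σ ^ 2 * β a ^ 2) ∧
    deriv (deriv w) a < 0 ∧
    (∃ b > a, deriv (deriv w) b = 0) ∧
    (∀ x ∈ Ioo a (sInf {x : ℝ | a ≤ x ∧ deriv (deriv w) x = 0}),
      deriv (deriv w) x < 0) := by
  have hμ : 0 < μ := hr.trans hμr
  have hβa : 0 < β a := hβpos a ha
  have hσ2 : (0:ℝ) < σ ^ 2 := by positivity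
  have hden : (0:ℝ) < μ ^ 2 + 2 * r * σ ^ 2 := by positivity
  have hδ0 : 0 < δ := by rw [hδ]; positivity
  have hδ1 : δ < 1 := by
    rw [hδ, div_lt_one hden]; nlinarith [sq_nonneg μ]
  have h1δ : 0 < 1 - δ := by linarith
  have hIci : Ici a ⊆ Ioi (0:ℝ) := fun x hx => lt_of_lt_of_le ha hx
  -- differentiability facts
  have hOpen : IsOpen (Ioi (0:ℝ)) := isOpen_Ioi
  have hwd : ∀ x ∈ Ioi (0:ℝ), DifferentiableAt ℝ w x := fun x hx =>
    (hw.differentiableOn (by norm_num)).differentiableAt (hOpen.mem_nhds hx)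
  have hw1 : ContDiffOn ℝ 1 (deriv w) (Ioi 0) :=
    hw.deriv_of_isOpen hOpen (by norm_num)
  have hw'd : ∀ x ∈ Ioi (0:ℝ), DifferentiableAt ℝ (deriv w) x := fun x hx =>
    (hw1.differentiableOn one_ne_zero).differentiableAt (hOpen.mem_nhds hx)
  have hw'c : ContinuousOn (deriv w) (Ioi 0) := hw1.continuousOn
  have hw''c : ContinuousOn (deriv (deriv w)) (Ioi 0) :=
    hw1.continuousOn_deriv_of_isOpen hOpen le_rfl
  have hwc : ContinuousOn w (Ioi 0) := hw.continuousOn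
  have hβc : ContinuousOn β (Ioi 0) := by
    have := hβconc.continuousOn_interior
    rwa [interior_Ici] at this
  -- value of w at a
  have hwa : w a = A * a ^ δ := hwpow a ⟨ha, le_rfl⟩
  have hwap : 0 < w a := by rw [hwa]; positivity
  -- first derivative at a
  have hpow : a ^ (δ - 1) = a ^ δ / a := by
    rw [Real.rpow_sub ha, Real.rpow_one]
  have hd1 : deriv w a = A * (δ * a ^ (δ - 1)) := by
    have hne : (𝓝[Ioo 0 a] a).NeBot := by
      apply mem_closure_iff_nhdsWithin_neBot.1
      rw [closure_Ioo (ne_of_lt ha)]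
      exact ⟨ha.le, le_rfl⟩
    have hca : ContinuousAt (deriv w) a := hw'c.continuousAt (hOpen.mem_nhds ha)
    have t1 : Tendsto (deriv w) (𝓝[Ioo 0 a] a) (𝓝 (deriv w a)) :=
      hca.tendsto.mono_left nhdsWithin_le_nhds
    have heq : ∀ x ∈ Ioo (0:ℝ) a, deriv w x = A * (δ * x ^ (δ - 1)) := by
      intro x hx
      have hev : w =ᶠ[𝓝 x] fun y => A * y ^ δ := by
        filter_upwards [isOpen_Ioo.mem_nhds hx] with y hy
        exact hwpow y ⟨hy.1, hy.2.le⟩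
      rw [hev.deriv_eq]
      have : HasDerivAt (fun y : ℝ => A * y ^ δ) (A * (δ * x ^ (δ - 1))) x :=
        (Real.hasDerivAt_rpow_const (Or.inl (ne_of_gt hx.1))).const_mul A
      exact this.deriv
    have hrc : ContinuousAt (fun x : ℝ => A * (δ * x ^ (δ - 1))) a :=
      continuousAt_const.mul (continuousAt_const.mul
        (Real.continuousAt_rpow_const a (δ - 1) (Or.inl (ne_of_gt ha))))
    have t2 : Tendsto (deriv w) (𝓝[Ioo 0 a] a) (𝓝 (A * (δ * a ^ (δ - 1)))) :=
      (hrc.tendsto.mono_left nhdsWithin_le_nhds).congr'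
        (Filter.eventuallyEq_of_mem self_mem_nhdsWithin fun x hx => (heq x hx).symm)
    exact tendsto_nhds_unique t1 t2
  -- key algebraic identity
  have hδ' : δ * μ ^ 2 = 2 * r * σ ^ 2 * (1 - δ) := by
    rw [hδ]; field_simp; ring
  have hkey : μ * β a * δ = 2 * r * a := by
    have h2 : σ ^ 2 * (1 - δ) ≠ 0 := by positivity
    apply mul_left_cancel₀ h2
    linear_combination μ * δ * hrel + a * hδ'
  -- second derivative expression on Ioi a
  have hw2 : ∀ x > a, deriv (deriv w) x =
      2 * (r * w x - μ * β x * deriv w x) / (σ ^ 2 * β x ^ 2) := by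
    intro x hx
    have hβx : 0 < β x := hβpos x (ha.trans hx)
    have h := hode x hx
    field_simp
    nlinarith [h]
  -- second derivative at a
  have hd2 : deriv (deriv w) a = -(2 * r * A * a ^ δ) / (σ ^ 2 * β a ^ 2) := by
    have hne : (𝓝[Ioi a] a).NeBot := nhdsGT_neBot a
    have hca : ContinuousAt (deriv (deriv w)) a := hw''c.continuousAt (hOpen.mem_nhds ha)
    have t1 : Tendsto (deriv (deriv w)) (𝓝[Ioi a] a) (𝓝 (deriv (deriv w) a)) :=
      hca.tendsto.mono_left nhdsWithin_le_nhds
    have hg : ContinuousAt (fun x => 2 * (r * w x - μ * β x * deriv w x) /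
        (σ ^ 2 * β x ^ 2)) a := by
      have hcw : ContinuousAt w a := hwc.continuousAt (hOpen.mem_nhds ha)
      have hcw' : ContinuousAt (deriv w) a := hw'c.continuousAt (hOpen.mem_nhds ha)
      have hcβ : ContinuousAt β a := hβc.continuousAt (hOpen.mem_nhds ha)
      apply ContinuousAt.div
      · exact continuousAt_const.mul ((continuousAt_const.mul hcw).sub
          ((continuousAt_const.mul hcβ).mul hcw'))
      · exact continuousAt_const.mul (hcβ.pow 2)
      · positivity
    have t2 : Tendsto (deriv (deriv w)) (𝓝[Ioi a] a)
        (𝓝 (2 * (r * w a - μ * β a * deriv w a) / (σ ^ 2 * β a ^ 2))) := by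
      apply Tendsto.congr' (Filter.eventuallyEq_of_mem self_mem_nhdsWithin
        fun x hx => (hw2 x hx).symm)
      exact hg.tendsto.mono_left nhdsWithin_le_nhds
    have heqa := tendsto_nhds_unique t1 t2
    rw [heqa, hwa, hd1, hpow]
    have hnum : r * (A * a ^ δ) - μ * β a * (A * (δ * (a ^ δ / a))) = -(r * (A * a ^ δ)) := by
      field_simp
      linear_combination (-1) * hkey
    rw [hnum]
    ring
  have hd2neg : deriv (deriv w) a < 0 := by
    rw [hd2]
    apply div_neg_of_neg_of_pos
    · have : 0 < a ^ δ := Real.rpow_pos_of_pos ha δ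
      nlinarith
    · positivity
  -- no-zero implies negative on [a, ∞): helper via IVT
  have hIVT : ∀ x, a < x → 0 ≤ deriv (deriv w) x → ∃ b > a, b ≤ x ∧ deriv (deriv w) b = 0 := by
    intro x hx hx0
    have hcont : ContinuousOn (deriv (deriv w)) (Icc a x) :=
      hw''c.mono (fun y hy => lt_of_lt_of_le ha hy.1)
    have h0 : (0:ℝ) ∈ Icc (deriv (deriv w) a) (deriv (deriv w) x) := ⟨hd2neg.le, hx0⟩
    obtain ⟨c, hc, hc0⟩ := intermediate_value_Icc hx.le hcont h0
    refine ⟨c, ?_, hc.2, hc0⟩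
    rcases eq_or_lt_of_le hc.1 with h | h
    · exfalso; rw [← h] at hc0; rw [hc0] at hd2neg; exact lt_irrefl 0 hd2neg
    · exact h
  -- existence of a zero
  have hexists : ∃ b > a, deriv (deriv w) b = 0 := by
    by_contra hb
    push_neg at hb
    -- then deriv (deriv w) < 0 on [a, ∞)
    have hneg : ∀ x, a ≤ x → deriv (deriv w) x < 0 := by
      intro x hx
      rcases eq_or_lt_of_le hx with h | h
      · rwa [← h]
      · by_contra h0
        push_neg at h0
        obtain ⟨b, hb1, _, hb3⟩ := hIVT x h h0
        exact hb b hb1 hb3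
    -- deriv w is antitone on Ici a
    have hanti : AntitoneOn (deriv w) (Ici a) := by
      apply antitoneOn_of_deriv_nonpos (convex_Ici a) (hw'c.mono hIci)
      · intro x hx
        rw [interior_Ici] at hx
        exact (hw'd x (ha.trans hx)).differentiableWithinAt
      · intro x hx
        rw [interior_Ici] at hx
        exact (hneg x hx.le).le
    -- deriv w ≥ 0 on Ici a
    have hd'nonneg : ∀ x, a ≤ x → 0 ≤ deriv w x := by
      intro x hx
      have hd : HasDerivAt w (deriv w x) x := (hwd x (hIci hx)).hasDerivAt
      rw [hasDerivAt_iff_tendsto_slope] at hd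
      have ht : Tendsto (slope w x) (𝓝[>] x) (𝓝 (deriv w x)) :=
        hd.mono_left (nhdsWithin_mono x fun y hy => ne_of_gt hy)
      refine ge_of_tendsto ht ?_
      filter_upwards [self_mem_nhdsWithin] with y hy
      rw [slope_def_field]
      apply div_nonneg
      · exact sub_nonneg.2 (hmono hx (hx.trans hy.le) hy.le)
      · exact sub_nonneg.2 (le_of_lt hy)
    -- limit of deriv w at infinity
    have hhanti : Antitone (fun t => deriv w (max t a)) := by
      intro s t hst
      exact hanti (le_max_right s a) (le_max_right t a) (max_le_max hst le_rfl)
    have hhbdd : BddBelow (range (fun t => deriv w (max t a))) :=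
      ⟨0, fun y ⟨t, ht⟩ => ht ▸ hd'nonneg _ (le_max_right t a)⟩
    obtain ⟨l, hl0, hge, htendw⟩ : ∃ l, 0 ≤ l ∧ (∀ x, a ≤ x → l ≤ deriv w x) ∧
        Tendsto (deriv w) atTop (𝓝 l) := by
      refine ⟨⨅ t, deriv w (max t a), ?_, ?_, ?_⟩
      · exact le_ciInf fun t => hd'nonneg _ (le_max_right t a)
      · intro x hx
        have h1 : (⨅ t, deriv w (max t a)) ≤ deriv w (max x a) := ciInf_le hhbdd x
        rwa [max_eq_left hx] at h1
      · have htendh : Tendsto (fun t => deriv w (max t a)) atTop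
            (𝓝 (⨅ t, deriv w (max t a))) := tendsto_atTop_ciInf hhanti hhbdd
        apply htendh.congr'
        filter_upwards [eventually_ge_atTop a] with t ht
        rw [max_eq_left ht]
    -- βbar facts
    have hβle : ∀ x, 0 < x → β x ≤ βbar := by
      intro x hx
      refine ge_of_tendsto hβlim ?_
      filter_upwards [eventually_ge_atTop x] with y hy
      exact hβmono hx.le (hx.le.trans hy) hy
    have hβbar : 0 < βbar := lt_of_lt_of_le hβa (hβle a ha)
    -- lower bound on w
    have hwlb : ∀ x, a ≤ x → w a + l * (x - a) ≤ w x := by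
      intro x hx
      have hmono_u : MonotoneOn (fun t => w t - l * t) (Ici a) := by
        apply monotoneOn_of_deriv_nonneg (convex_Ici a)
        · exact ((hwc.mono hIci).sub (continuous_const.mul continuous_id).continuousOn)
        · intro t ht
          rw [interior_Ici] at ht
          exact ((hwd t (ha.trans ht)).sub (differentiableAt_id.const_mul l)).differentiableWithinAt
        · intro t ht
          rw [interior_Ici] at ht
          have hda : HasDerivAt (fun t => w t - l * t) (deriv w t - l * 1) t :=
            ((hwd t (ha.trans ht)).hasDerivAt).sub ((hasDerivAt_id t).const_mul l)
          rw [hda.deriv]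
          have := hge t ht.le
          linarith
      have h6 : w a - l * a ≤ w x - l * x := hmono_u self_mem_Ici hx hx
      nlinarith [h6]
    -- pick a large point
    have hε : 0 < r * w a / (2 * μ * βbar) := by positivity
    have hev : ∀ᶠ x in atTop, deriv w x < l + r * w a / (2 * μ * βbar) := by
      have := htendw.eventually (eventually_lt_nhds (lt_add_of_pos_right l hε))
      exact this
    obtain ⟨x₀, hx₀ev, hx₀ge⟩ :=
      ((hev.and (eventually_ge_atTop (a + μ * βbar / r + 1))).exists)
    have hx₀a : a < x₀ := by
      have : 0 < μ * βbar / r := by positivity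
      linarith
    have hβx₀ : 0 < β x₀ := hβpos x₀ (ha.trans hx₀a)
    have hwx₀ : 0 ≤ deriv w x₀ := hd'nonneg x₀ hx₀a.le
    -- positivity of r w x₀ - μ β x₀ w' x₀
    have hf : r * w a / 2 ≤ r * w x₀ - μ * β x₀ * deriv w x₀ := by
      have h1 : w a + l * (x₀ - a) ≤ w x₀ := hwlb x₀ hx₀a.le
      have h2 : μ * β x₀ * deriv w x₀ ≤ μ * βbar * deriv w x₀ := by
        apply mul_le_mul_of_nonneg_right _ hwx₀
        exact mul_le_mul_of_nonneg_left (hβle x₀ (ha.trans hx₀a)) hμ.le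
      have h3 : μ * βbar * deriv w x₀ ≤ μ * βbar * (l + r * w a / (2 * μ * βbar)) := by
        apply mul_le_mul_of_nonneg_left hx₀ev.le (by positivity)
      have h4 : μ * βbar * (l + r * w a / (2 * μ * βbar)) = μ * βbar * l + r * w a / 2 := by
        field_simp
      have h5 : μ * βbar * l ≤ r * l * (x₀ - a) := by
        have hxa : μ * βbar / r ≤ x₀ - a := by linarith
        have := mul_le_mul_of_nonneg_left hxa (mul_nonneg hr.le hl0)
        calc μ * βbar * l = r * l * (μ * βbar / r) := by field_simp
          _ ≤ r * l * (x₀ - a) := this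
      nlinarith
    have hpos : 0 < deriv (deriv w) x₀ := by
      rw [hw2 x₀ hx₀a]
      apply div_pos
      · nlinarith
      · positivity
    exact absurd (hneg x₀ hx₀a.le) (not_lt.2 hpos.le)
  refine ⟨hd2, hd2neg, hexists, ?_⟩
  -- concavity on (a, b)
  intro x hx
  set S := {x : ℝ | a ≤ x ∧ deriv (deriv w) x = 0} with hS
  obtain ⟨b, hba, hb0⟩ := hexists
  have hSne : S.Nonempty := ⟨b, hba.le, hb0⟩
  have hSbd : BddBelow S := ⟨a, fun y hy => hy.1⟩
  by_contra h0
  push_neg at h0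
  have hne : deriv (deriv w) x ≠ 0 := by
    intro h
    have : sInf S ≤ x := csInf_le hSbd ⟨(hx.1).le, h⟩
    exact absurd hx.2 (not_lt.2 this)
  have hgt : 0 < deriv (deriv w) x := lt_of_le_of_ne h0 (Ne.symm hne)
  obtain ⟨c, hc1, hc2, hc3⟩ := hIVT x hx.1 hgt.le
  have : sInf S ≤ c := csInf_le hSbd ⟨hc1.le, hc3⟩
  have : sInf S ≤ x := this.trans hc2
  exact absurd hx.2 (not_lt.2 this)
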